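/- arXiv:2211.04940 — 2 statements merged into one kernel-verified Lean document; each statement's English description precedes it below -/
import Mathlib

section
/- Let $L > 1$ and let $\chi : \mathbb{R}^d \to (0,\infty)$ be $(1/L)$-Lipschitz. Then there exist constants $0 < c_1 \le c_2 < \infty$ depending only on $d$ and $L$ such that for every measurable $f : \mathbb{R}^d \to [0,\infty)$, $c_1 \int_{\mathbb{R}^d} f \;\le\; \int_{\mathbb{R}^d} \Big( \frac{1}{|B_{\chi(x)}(x)|} \int_{B_{\chi(x)}(x)} f \Big)\,dx \;\le\; c_2 \int_{\mathbb{R}^d} f$. -/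
open Metric MeasureTheory ENNReal

theorem stmt4 {d : ℕ} (L : ℝ) (hL : 1 < L)
    (χ : EuclideanSpace ℝ (Fin d) → ℝ) (hpos : ∀ x, 0 < χ x)
    (hlip : ∀ x y, |χ x - χ y| ≤ dist x y / L) :
    ∃ c1 c2 : ℝ≥0∞, 0 < c1 ∧ c1 ≤ c2 ∧ c2 < ⊤ ∧
      ∀ f : EuclideanSpace ℝ (Fin d) → ℝ≥0∞, Measurable f →
        c1 * (∫⁻ x, f x) ≤
            (∫⁻ x, (∫⁻ y in ball x (χ x), f y) / volume (ball x (χ x))) ∧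
          (∫⁻ x, (∫⁻ y in ball x (χ x), f y) / volume (ball x (χ x))) ≤
            c2 * (∫⁻ x, f x) := by
  classical
  have hL0 : (0:ℝ) < L := lt_trans one_pos hL
  have hLm : (0:ℝ) < L - 1 := by linarith
  have hLp : (0:ℝ) < L + 1 := by linarith
  -- continuity of χ
  have hχc : Continuous χ := by
    have : LipschitzWith (Real.toNNReal (1/L)) χ := by
      apply LipschitzWith.of_dist_le_mul
      intro x y
      rw [Real.dist_eq, Real.coe_toNNReal _ (by positivity)]
      calc |χ x - χ y| ≤ dist x y / L := hlip x y
        _ = (1/L) * dist x y := by ring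
    exact this.continuous
  have hχm : Measurable χ := hχc.measurable
  set c0 : ℝ≥0∞ := volume (ball (0 : EuclideanSpace ℝ (Fin d)) 1) with hc0
  have c0pos : 0 < c0 := measure_ball_pos _ _ one_pos
  have c0lt : c0 < ⊤ := measure_ball_lt_top
  have hV : ∀ x : EuclideanSpace ℝ (Fin d),
      volume (ball x (χ x)) = ENNReal.ofReal ((χ x)^d) * c0 := by
    intro x
    rw [Measure.addHaar_ball_of_pos volume x (hpos x), finrank_euclideanSpace_fin]
  -- the ratio computation
  have ratio : ∀ s t : ℝ, 0 < s → 0 < t →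
      (ENNReal.ofReal (s^d) * c0)⁻¹ * (ENNReal.ofReal (t^d) * c0)
        = ENNReal.ofReal ((t/s)^d) := by
    intro s t hs ht
    have hs' : (0:ℝ) < s ^ d := by positivity
    rw [ENNReal.mul_inv (Or.inl (ENNReal.ofReal_pos.2 hs').ne') (Or.inl ENNReal.ofReal_ne_top)]
    have hre : (ENNReal.ofReal (s^d))⁻¹ * c0⁻¹ * (ENNReal.ofReal (t^d) * c0)
        = (ENNReal.ofReal (t^d) * (ENNReal.ofReal (s^d))⁻¹) * (c0⁻¹ * c0) := by ring
    rw [hre, ENNReal.inv_mul_cancel c0pos.ne' c0lt.ne, mul_one,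
      ← div_eq_mul_inv, div_pow, ENNReal.ofReal_div_of_pos hs']
  -- constants
  refine ⟨ENNReal.ofReal (((L-1)/(L+1))^d), ENNReal.ofReal (((L+1)/(L-1))^d),
    ENNReal.ofReal_pos.2 (by positivity), ?_, ENNReal.ofReal_lt_top, ?_⟩
  · apply ENNReal.ofReal_le_ofReal
    apply pow_le_pow_left₀ (by positivity)
    rw [div_le_div_iff₀ hLp hLm]
    nlinarith
  intro f hf
  -- weight function
  set w : EuclideanSpace ℝ (Fin d) → ℝ≥0∞ := fun y =>
    ∫⁻ x, Set.indicator {x : EuclideanSpace ℝ (Fin d) | dist y x < χ x}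
      (fun x => (ENNReal.ofReal ((χ x)^d) * c0)⁻¹) x with hw
  have hslice_open : ∀ y : EuclideanSpace ℝ (Fin d),
      IsOpen {x : EuclideanSpace ℝ (Fin d) | dist y x < χ x} := fun y =>
    isOpen_lt (continuous_const.dist continuous_id) hχc
  have hinvm : Measurable fun x : EuclideanSpace ℝ (Fin d) =>
      (ENNReal.ofReal ((χ x)^d) * c0)⁻¹ :=
    (((hχm.pow_const d).ennreal_ofReal).mul_const c0).inv
  -- two Lipschitz consequences in multiplied form
  have h12 : ∀ x y : EuclideanSpace ℝ (Fin d),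
      χ x * L - χ y * L ≤ dist y x ∧ χ y * L - χ x * L ≤ dist y x := by
    intro x y
    have habs := abs_le.1 (hlip x y)
    have h1 : (χ x - χ y) * L ≤ dist x y := (le_div_iff₀ hL0).1 habs.2
    have h2 : (χ y - χ x) * L ≤ dist x y := (le_div_iff₀ hL0).1 (by linarith [habs.1])
    rw [dist_comm] at h1 h2
    constructor <;> nlinarith
  -- rewrite middle integral via Tonelli
  have hmid : (∫⁻ x, (∫⁻ y in ball x (χ x), f y) / volume (ball x (χ x)))
      = ∫⁻ y, f y * w y := by
    have step1 : ∀ x : EuclideanSpace ℝ (Fin d),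
        (∫⁻ y in ball x (χ x), f y) / volume (ball x (χ x))
        = ∫⁻ y, Set.indicator {p : EuclideanSpace ℝ (Fin d) × EuclideanSpace ℝ (Fin d) |
              dist p.2 p.1 < χ p.1}
            (fun p => f p.2 * (ENNReal.ofReal ((χ p.1)^d) * c0)⁻¹) (x, y) := by
      intro x
      rw [div_eq_mul_inv, hV x, ← lintegral_indicator measurableSet_ball f,
        ← lintegral_mul_const _ (hf.indicator measurableSet_ball)]
      congr 1
      funext y
      by_cases hy : y ∈ ball x (χ x)
      · have hmem : (x, y) ∈ {p : EuclideanSpace ℝ (Fin d) × EuclideanSpace ℝ (Fin d) |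
            dist p.2 p.1 < χ p.1} := mem_ball.1 hy
        rw [Set.indicator_of_mem hy, Set.indicator_of_mem hmem]
      · have hmem : (x, y) ∉ {p : EuclideanSpace ℝ (Fin d) × EuclideanSpace ℝ (Fin d) |
            dist p.2 p.1 < χ p.1} := fun h => hy (mem_ball.2 h)
        rw [Set.indicator_of_notMem hy, Set.indicator_of_notMem hmem, zero_mul]
    simp only [step1]
    have hAmeas : MeasurableSet {p : EuclideanSpace ℝ (Fin d) × EuclideanSpace ℝ (Fin d) |
        dist p.2 p.1 < χ p.1} :=
      (isOpen_lt (continuous_snd.dist continuous_fst) (hχc.comp continuous_fst)).measurableSet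
    have hFm : Measurable (Function.uncurry fun x y : EuclideanSpace ℝ (Fin d) =>
        Set.indicator {p : EuclideanSpace ℝ (Fin d) × EuclideanSpace ℝ (Fin d) |
            dist p.2 p.1 < χ p.1}
            (fun p => f p.2 * (ENNReal.ofReal ((χ p.1)^d) * c0)⁻¹) (x, y)) := by
      exact Measurable.indicator ((hf.comp measurable_snd).mul
        (hinvm.comp measurable_fst)) hAmeas
    rw [lintegral_lintegral_swap hFm.aemeasurable]
    congr 1
    funext y
    have step2 : ∀ x : EuclideanSpace ℝ (Fin d),
        Set.indicator {p : EuclideanSpace ℝ (Fin d) × EuclideanSpace ℝ (Fin d) |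
            dist p.2 p.1 < χ p.1}
            (fun p => f p.2 * (ENNReal.ofReal ((χ p.1)^d) * c0)⁻¹) (x, y)
        = f y * Set.indicator {x : EuclideanSpace ℝ (Fin d) | dist y x < χ x}
            (fun x => (ENNReal.ofReal ((χ x)^d) * c0)⁻¹) x := by
      intro x
      by_cases hx : dist y x < χ x
      · have hmemp : (x, y) ∈ {p : EuclideanSpace ℝ (Fin d) × EuclideanSpace ℝ (Fin d) |
            dist p.2 p.1 < χ p.1} := hx
        have hmems : x ∈ {x : EuclideanSpace ℝ (Fin d) | dist y x < χ x} := hx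
        rw [Set.indicator_of_mem hmemp, Set.indicator_of_mem hmems]
      · have hmemp : (x, y) ∉ {p : EuclideanSpace ℝ (Fin d) × EuclideanSpace ℝ (Fin d) |
            dist p.2 p.1 < χ p.1} := hx
        have hmems : x ∉ {x : EuclideanSpace ℝ (Fin d) | dist y x < χ x} := hx
        rw [Set.indicator_of_notMem hmemp, Set.indicator_of_notMem hmems, mul_zero]
    simp only [step2]
    rw [lintegral_const_mul _ (hinvm.indicator (hslice_open y).measurableSet)]
  -- lower bound on the weight
  have wlo : ∀ y : EuclideanSpace ℝ (Fin d),
      ENNReal.ofReal (((L-1)/(L+1))^d) ≤ w y := by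
    intro y
    have ha0 : 0 < χ y := hpos y
    have hr10 : 0 < L * χ y / (L + 1) := by positivity
    have hr20 : 0 < L * χ y / (L - 1) := by positivity
    have hle : (ball y (L * χ y / (L + 1))).indicator
          (fun _ => (ENNReal.ofReal ((L * χ y / (L - 1))^d) * c0)⁻¹)
        ≤ fun x => Set.indicator {x : EuclideanSpace ℝ (Fin d) | dist y x < χ x}
            (fun x => (ENNReal.ofReal ((χ x)^d) * c0)⁻¹) x := by
      intro x
      by_cases hx : x ∈ ball y (L * χ y / (L + 1))
      · have hD : dist y x < L * χ y / (L + 1) := by rwa [mem_ball'] at hx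
        have hD' : dist y x * (L + 1) < L * χ y := (lt_div_iff₀ hLp).1 hD
        obtain ⟨h1, h2⟩ := h12 x y
        have hd0 : (0:ℝ) ≤ dist y x := dist_nonneg
        have hin : dist y x < χ x := by
          have hml : dist y x * L < χ x * L := by linarith
          exact lt_of_mul_lt_mul_right hml hL0.le
        have hup : χ x ≤ L * χ y / (L - 1) := by
          rw [le_div_iff₀ hLm]
          nlinarith
        have hmems : x ∈ {x : EuclideanSpace ℝ (Fin d) | dist y x < χ x} := hin
        dsimp only
        rw [Set.indicator_of_mem hx, Set.indicator_of_mem hmems]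
        apply ENNReal.inv_le_inv.2
        apply mul_le_mul_left
        exact ENNReal.ofReal_le_ofReal (pow_le_pow_left₀ (hpos x).le hup d)
      · dsimp only
        rw [Set.indicator_of_notMem hx]; exact zero_le
    calc ENNReal.ofReal (((L-1)/(L+1))^d)
        = (ENNReal.ofReal ((L * χ y / (L - 1))^d) * c0)⁻¹
            * (ENNReal.ofReal ((L * χ y / (L + 1))^d) * c0) := by
          rw [ratio _ _ hr20 hr10]
          congr 2
          field_simp
      _ = ∫⁻ x, (ball y (L * χ y / (L + 1))).indicator
            (fun _ => (ENNReal.ofReal ((L * χ y / (L - 1))^d) * c0)⁻¹) x := by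
          rw [lintegral_indicator_const measurableSet_ball,
            Measure.addHaar_ball_of_pos volume y hr10, finrank_euclideanSpace_fin]
      _ ≤ w y := lintegral_mono hle
  -- upper bound on the weight
  have whi : ∀ y : EuclideanSpace ℝ (Fin d),
      w y ≤ ENNReal.ofReal (((L+1)/(L-1))^d) := by
    intro y
    have ha0 : 0 < χ y := hpos y
    have hr10 : 0 < L * χ y / (L + 1) := by positivity
    have hr20 : 0 < L * χ y / (L - 1) := by positivity
    have hle : (fun x => Set.indicator {x : EuclideanSpace ℝ (Fin d) | dist y x < χ x}
            (fun x => (ENNReal.ofReal ((χ x)^d) * c0)⁻¹) x)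
        ≤ (ball y (L * χ y / (L - 1))).indicator
            (fun _ => (ENNReal.ofReal ((L * χ y / (L + 1))^d) * c0)⁻¹) := by
      intro x
      by_cases hx : dist y x < χ x
      · obtain ⟨h1, h2⟩ := h12 x y
        have hd0 : (0:ℝ) ≤ dist y x := dist_nonneg
        have hχup : χ x < L * χ y / (L - 1) := by
          rw [lt_div_iff₀ hLm]
          nlinarith
        have hχlo : L * χ y / (L + 1) < χ x := by
          rw [div_lt_iff₀ hLp]
          nlinarith
        have hball : x ∈ ball y (L * χ y / (L - 1)) := by
          rw [mem_ball']
          exact lt_trans hx hχup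
        have hmems : x ∈ {x : EuclideanSpace ℝ (Fin d) | dist y x < χ x} := hx
        dsimp only
        rw [Set.indicator_of_mem hmems, Set.indicator_of_mem hball]
        apply ENNReal.inv_le_inv.2
        apply mul_le_mul_left
        exact ENNReal.ofReal_le_ofReal (pow_le_pow_left₀ hr10.le hχlo.le d)
      · have hmems : x ∉ {x : EuclideanSpace ℝ (Fin d) | dist y x < χ x} := hx
        dsimp only
        rw [Set.indicator_of_notMem hmems]; exact zero_le
    calc w y ≤ ∫⁻ x, (ball y (L * χ y / (L - 1))).indicator
            (fun _ => (ENNReal.ofReal ((L * χ y / (L + 1))^d) * c0)⁻¹) x :=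
          lintegral_mono hle
      _ = (ENNReal.ofReal ((L * χ y / (L + 1))^d) * c0)⁻¹
            * (ENNReal.ofReal ((L * χ y / (L - 1))^d) * c0) := by
          rw [lintegral_indicator_const measurableSet_ball,
            Measure.addHaar_ball_of_pos volume y hr20, finrank_euclideanSpace_fin]
      _ = ENNReal.ofReal (((L+1)/(L-1))^d) := by
          rw [ratio _ _ hr10 hr20]
          congr 2
          field_simp
  constructor
  · rw [hmid, ← lintegral_const_mul _ hf]
    apply lintegral_mono
    intro y
    calc ENNReal.ofReal (((L-1)/(L+1))^d) * f y
        = f y * ENNReal.ofReal (((L-1)/(L+1))^d) := mul_comm _ _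
      _ ≤ f y * w y := mul_le_mul_right (wlo y) _
  · rw [hmid, ← lintegral_const_mul _ hf]
    apply lintegral_mono
    intro y
    calc f y * w y ≤ f y * ENNReal.ofReal (((L+1)/(L-1))^d) :=
          mul_le_mul_right (whi y) _
      _ = ENNReal.ofReal (((L+1)/(L-1))^d) * f y := mul_comm _ _
end

section
/- Let $L \ge 8$ and let $\chi : \mathbb{R}^d \to (0,\infty)$ be $(1/L)$-Lipschitz. Let $X \in \mathbb{R}^d$ and $r \ge \chi(X)/4$. Then there is a constant $C = C(d, L)$ such that for every measurable $f : \mathbb{R}^d \to [0,\infty)$, $\frac{1}{|B_r(X)|}\int_{B_r(X)} f \;\le\; C\, \frac{1}{|B_{2r}(X)|}\int_{B_{2r}(X)} \Big( \frac{1}{|B_{\chi(x)}(x)|}\int_{B_{\chi(x)}(x)} f \Big)\,dx \;\le\; C^2\, \frac{1}{|B_{7r}(X)|}\int_{B_{7r}(X)} f$. -/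
open Metric MeasureTheory ENNReal Set Function

namespace Stmt5Aux

variable {d : ℕ}

/-- Volume of a ball of positive radius in Euclidean space. -/
lemma vol_ball (x : EuclideanSpace ℝ (Fin d)) {a : ℝ} (ha : 0 < a) :
    volume (ball x a)
      = ENNReal.ofReal a ^ d * volume (ball (0 : EuclideanSpace ℝ (Fin d)) 1) := by
  rcases Nat.eq_zero_or_pos d with hd | hd
  · subst hd
    have h1 : ball x a = (univ : Set (EuclideanSpace ℝ (Fin 0))) :=
      eq_univ_of_forall fun y => by
        simp [mem_ball, Subsingleton.elim y x, ha]
    have h2 : ball (0 : EuclideanSpace ℝ (Fin 0)) 1 = univ :=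
      eq_univ_of_forall fun y => by
        simp [mem_ball, Subsingleton.elim y (0 : EuclideanSpace ℝ (Fin 0))]
    simp [h1, h2]
  · have : Nonempty (Fin d) := ⟨⟨0, hd⟩⟩
    rw [Measure.addHaar_ball volume x ha.le, finrank_euclideanSpace_fin,
      ENNReal.ofReal_pow ha.le]

lemma ratio_cancel {ω : ℝ≥0∞} (hω0 : ω ≠ 0) (hωt : ω ≠ ⊤) {a b t : ℝ}
    (hb : 0 < b) (ht : 0 ≤ t) (hab : a = t * b) :
    ENNReal.ofReal a ^ d * ω * (ENNReal.ofReal b ^ d * ω)⁻¹ = ENNReal.ofReal t ^ d := by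
  have hb0 : ENNReal.ofReal b ≠ 0 := by
    simp [ENNReal.ofReal_eq_zero, not_le, hb]
  have hZ0 : ENNReal.ofReal b ^ d * ω ≠ 0 := mul_ne_zero (pow_ne_zero _ hb0) hω0
  have hZt : ENNReal.ofReal b ^ d * ω ≠ ⊤ :=
    ENNReal.mul_ne_top (ENNReal.pow_ne_top ENNReal.ofReal_ne_top) hωt
  have ha' : ENNReal.ofReal a = ENNReal.ofReal t * ENNReal.ofReal b := by
    rw [hab, ENNReal.ofReal_mul ht]
  rw [ha', mul_pow]
  have hring : ENNReal.ofReal t ^ d * ENNReal.ofReal b ^ d * ω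
        * (ENNReal.ofReal b ^ d * ω)⁻¹
      = ENNReal.ofReal t ^ d
        * ((ENNReal.ofReal b ^ d * ω) * (ENNReal.ofReal b ^ d * ω)⁻¹) := by
    ring
  rw [hring, ENNReal.mul_inv_cancel hZ0 hZt, mul_one]

section Main

variable (L : ℝ) (χ : EuclideanSpace ℝ (Fin d) → ℝ)

/-- The middle double integral, rewritten via Tonelli. -/
lemma swapM (hpos : ∀ x, 0 < χ x) (hcont : Continuous χ)
    (f : EuclideanSpace ℝ (Fin d) → ℝ≥0∞) (hf : Measurable f)
    (X : EuclideanSpace ℝ (Fin d)) (R : ℝ) :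
    (∫⁻ x in ball X R, (∫⁻ y in ball x (χ x), f y) / volume (ball x (χ x)))
      = ∫⁻ y, f y * ∫⁻ x in ball X R,
          Set.indicator {x' | dist y x' < χ x'}
            (fun x' => (volume (ball x' (χ x')))⁻¹) x := by
  set ω := volume (ball (0 : EuclideanSpace ℝ (Fin d)) 1) with hω
  have hVmeas : Measurable fun x : EuclideanSpace ℝ (Fin d) => volume (ball x (χ x)) := by
    have hVeq : (fun x : EuclideanSpace ℝ (Fin d) => volume (ball x (χ x)))
        = fun x => ENNReal.ofReal (χ x) ^ d * ω := funext fun x => vol_ball x (hpos x)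
    rw [hVeq]
    exact ((ENNReal.measurable_ofReal.comp hcont.measurable).pow_const d).mul_const ω
  set F : EuclideanSpace ℝ (Fin d) → EuclideanSpace ℝ (Fin d) → ℝ≥0∞ :=
    fun x y => (ball x (χ x)).indicator f y * (volume (ball x (χ x)))⁻¹ with hF
  have step1 : (∫⁻ x in ball X R, (∫⁻ y in ball x (χ x), f y) / volume (ball x (χ x)))
      = ∫⁻ x in ball X R, ∫⁻ y, F x y := by
    refine lintegral_congr fun x => ?_
    rw [hF]
    rw [lintegral_mul_const _ (hf.indicator measurableSet_ball),
      lintegral_indicator measurableSet_ball, div_eq_mul_inv]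
  have hU : MeasurableSet {p : EuclideanSpace ℝ (Fin d) × EuclideanSpace ℝ (Fin d) |
      dist p.2 p.1 < χ p.1} :=
    (isOpen_lt (continuous_snd.dist continuous_fst) (hcont.comp continuous_fst)).measurableSet
  have hFmeas : Measurable (uncurry F) := by
    have huncurry : uncurry F = Set.indicator
        {p : EuclideanSpace ℝ (Fin d) × EuclideanSpace ℝ (Fin d) | dist p.2 p.1 < χ p.1}
        (fun p => f p.2 * (volume (ball p.1 (χ p.1)))⁻¹) := by
      funext p
      by_cases hp : dist p.2 p.1 < χ p.1
      · show (ball p.1 (χ p.1)).indicator f p.2 * (volume (ball p.1 (χ p.1)))⁻¹ = _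
        rw [Set.indicator_of_mem (mem_ball.mpr hp),
          Set.indicator_of_mem (show p ∈ {p : EuclideanSpace ℝ (Fin d) ×
            EuclideanSpace ℝ (Fin d) | dist p.2 p.1 < χ p.1} from hp)]
      · show (ball p.1 (χ p.1)).indicator f p.2 * (volume (ball p.1 (χ p.1)))⁻¹ = _
        rw [Set.indicator_of_notMem (fun h => hp (mem_ball.mp h)),
          Set.indicator_of_notMem (show p ∉ {p : EuclideanSpace ℝ (Fin d) ×
            EuclideanSpace ℝ (Fin d) | dist p.2 p.1 < χ p.1} from hp), zero_mul]
    rw [huncurry]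
    exact ((hf.comp measurable_snd).mul ((hVmeas.comp measurable_fst).inv)).indicator hU
  have step2 : (∫⁻ x in ball X R, ∫⁻ y, F x y) = ∫⁻ y, ∫⁻ x in ball X R, F x y :=
    lintegral_lintegral_swap hFmeas.aemeasurable
  have step3 : ∀ y, (∫⁻ x in ball X R, F x y)
      = f y * ∫⁻ x in ball X R,
          Set.indicator {x' | dist y x' < χ x'}
            (fun x' => (volume (ball x' (χ x')))⁻¹) x := by
    intro y
    have hSmeas : MeasurableSet {x' : EuclideanSpace ℝ (Fin d) | dist y x' < χ x'} :=
      (isOpen_lt (continuous_const.dist continuous_id) hcont).measurableSet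
    have hpt : ∀ x, F x y = f y * Set.indicator {x' | dist y x' < χ x'}
        (fun x' => (volume (ball x' (χ x')))⁻¹) x := by
      intro x
      by_cases hx : dist y x < χ x
      · show (ball x (χ x)).indicator f y * (volume (ball x (χ x)))⁻¹ = _
        rw [Set.indicator_of_mem (mem_ball.mpr hx),
          Set.indicator_of_mem (show x ∈ {x' : EuclideanSpace ℝ (Fin d) |
            dist y x' < χ x'} from hx)]
      · show (ball x (χ x)).indicator f y * (volume (ball x (χ x)))⁻¹ = _
        rw [Set.indicator_of_notMem (fun h => hx (mem_ball.mp h)),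
          Set.indicator_of_notMem (show x ∉ {x' : EuclideanSpace ℝ (Fin d) |
            dist y x' < χ x'} from hx), zero_mul, mul_zero]
    calc (∫⁻ x in ball X R, F x y)
        = ∫⁻ x in ball X R, f y * Set.indicator {x' | dist y x' < χ x'}
            (fun x' => (volume (ball x' (χ x')))⁻¹) x := lintegral_congr fun x => hpt x
      _ = f y * ∫⁻ x in ball X R, Set.indicator {x' | dist y x' < χ x'}
            (fun x' => (volume (ball x' (χ x')))⁻¹) x :=
          lintegral_const_mul _ (hVmeas.inv.indicator hSmeas)
  rw [step1, step2]
  exact lintegral_congr step3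


lemma divA {I M C k s V : ℝ≥0∞} (hkM : k * I ≤ M) (hs0 : s ≠ 0) (hst : s ≠ ⊤)
    (hC : s ≤ C * k) : I / V ≤ C * (M / (s * V)) := by
  have h1 : I / V = s * I / (s * V) := (ENNReal.mul_div_mul_left I V hs0 hst).symm
  rw [h1]
  calc s * I / (s * V) ≤ C * k * I / (s * V) := by gcongr
    _ = C * (k * I) / (s * V) := by rw [mul_assoc]
    _ = C * ((k * I) / (s * V)) := mul_div_assoc _ _ _
    _ ≤ C * (M / (s * V)) := by gcongr

lemma divB {I M C k s V : ℝ≥0∞} (hM : M ≤ k * I) (hs0 : s ≠ 0) (hst : s ≠ ⊤)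
    (hC : k * s ≤ C) : M / V ≤ C * (I / (s * V)) := by
  calc M / V ≤ (k * I) / V := by gcongr
    _ = s * (k * I) / (s * V) := (ENNReal.mul_div_mul_left _ _ hs0 hst).symm
    _ = (k * s) * I / (s * V) := by rw [show s * (k * I) = (k * s) * I by ring]
    _ ≤ C * I / (s * V) := by gcongr
    _ = C * (I / (s * V)) := mul_div_assoc _ _ _

lemma upperM (hL : 8 ≤ L) (hpos : ∀ x, 0 < χ x)
    (hlip : ∀ x y, |χ x - χ y| ≤ dist x y / L) (hcont : Continuous χ)
    (X : EuclideanSpace ℝ (Fin d)) {r : ℝ} (hr : χ X / 4 ≤ r)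
    (f : EuclideanSpace ℝ (Fin d) → ℝ≥0∞) (hf : Measurable f) :
    (∫⁻ x in ball X (2 * r), (∫⁻ y in ball x (χ x), f y) / volume (ball x (χ x)))
      ≤ ENNReal.ofReal (9/7) ^ d * ∫⁻ y in ball X (7 * r), f y := by
  set ω := volume (ball (0 : EuclideanSpace ℝ (Fin d)) 1) with hωdef
  have hω0 : ω ≠ 0 := (measure_ball_pos volume _ one_pos).ne'
  have hωt : ω ≠ ⊤ := measure_ball_lt_top.ne
  have hL0 : (0:ℝ) < L := by linarith
  have hdivL : ∀ a : ℝ, 0 ≤ a → a / L ≤ a / 8 := fun a ha => by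
    rw [div_le_div_iff₀ hL0 (by norm_num : (0:ℝ) < 8)]; nlinarith
  have hr0 : (0:ℝ) < r := lt_of_lt_of_le (by have := hpos X; linarith) hr
  have hχX : χ X ≤ 4 * r := by linarith
  rw [swapM χ hpos hcont f hf X (2*r)]
  have hHle : ∀ y, (∫⁻ x in ball X (2*r),
      Set.indicator {x' | dist y x' < χ x'} (fun x' => (volume (ball x' (χ x')))⁻¹) x)
      ≤ ENNReal.ofReal (9/7) ^ d := by
    intro y
    have hyc := hpos y
    have hpt : ∀ x, Set.indicator {x' | dist y x' < χ x'}
        (fun x' => (volume (ball x' (χ x')))⁻¹) x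
        ≤ Set.indicator (ball y (8/7 * χ y))
          (fun _ => (ENNReal.ofReal (8/9 * χ y) ^ d * ω)⁻¹) x := by
      intro x
      by_cases hx : dist y x < χ x
      · have habs := abs_le.mp (hlip x y)
        have hxy : dist x y < χ x := by rw [dist_comm]; exact hx
        have hd8 := hdivL (dist x y) dist_nonneg
        have h1 : χ x ≤ 8/7 * χ y := by linarith [habs.2]
        have h2 : 8/9 * χ y ≤ χ x := by linarith [habs.1]
        have hmem : x ∈ ball y (8/7 * χ y) := mem_ball.mpr (by linarith)
        rw [Set.indicator_of_mem (show x ∈ {x' : EuclideanSpace ℝ (Fin d) |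
            dist y x' < χ x'} from hx), Set.indicator_of_mem hmem]
        apply ENNReal.inv_le_inv'
        rw [← vol_ball x (by linarith : (0:ℝ) < 8/9 * χ y)]
        exact measure_mono (ball_subset_ball h2)
      · rw [Set.indicator_of_notMem (show x ∉ {x' : EuclideanSpace ℝ (Fin d) |
            dist y x' < χ x'} from hx)]
        exact zero_le
    calc (∫⁻ x in ball X (2*r), Set.indicator {x' | dist y x' < χ x'}
          (fun x' => (volume (ball x' (χ x')))⁻¹) x)
        ≤ ∫⁻ x in ball X (2*r), Set.indicator (ball y (8/7 * χ y))
            (fun _ => (ENNReal.ofReal (8/9 * χ y) ^ d * ω)⁻¹) x := lintegral_mono hpt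
      _ ≤ ∫⁻ x, Set.indicator (ball y (8/7 * χ y))
            (fun _ => (ENNReal.ofReal (8/9 * χ y) ^ d * ω)⁻¹) x :=
          setLIntegral_le_lintegral _ _
      _ = (ENNReal.ofReal (8/9 * χ y) ^ d * ω)⁻¹ * volume (ball y (8/7 * χ y)) := by
          rw [lintegral_indicator measurableSet_ball, setLIntegral_const]
      _ = ENNReal.ofReal (8/7 * χ y) ^ d * ω * (ENNReal.ofReal (8/9 * χ y) ^ d * ω)⁻¹ := by
          rw [vol_ball y (by linarith : (0:ℝ) < 8/7 * χ y), mul_comm]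
      _ = ENNReal.ofReal (9/7) ^ d :=
          ratio_cancel hω0 hωt (by linarith) (by norm_num) (by ring)
  have hmain : ∀ y, f y * (∫⁻ x in ball X (2*r),
      Set.indicator {x' | dist y x' < χ x'} (fun x' => (volume (ball x' (χ x')))⁻¹) x)
      ≤ Set.indicator (ball X (7*r)) (fun y => ENNReal.ofReal (9/7) ^ d * f y) y := by
    intro y
    by_cases hy : y ∈ ball X (7*r)
    · rw [Set.indicator_of_mem hy]
      exact le_trans (mul_le_mul_right (hHle y) _) (le_of_eq (mul_comm _ _))
    · rw [Set.indicator_of_notMem hy]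
      have hzero : (∫⁻ x in ball X (2*r),
          Set.indicator {x' | dist y x' < χ x'}
            (fun x' => (volume (ball x' (χ x')))⁻¹) x) = 0 := by
        have hae : ∀ᵐ x ∂(volume.restrict (ball X (2*r))),
            Set.indicator {x' | dist y x' < χ x'}
              (fun x' => (volume (ball x' (χ x')))⁻¹) x = 0 := by
          filter_upwards [ae_restrict_mem measurableSet_ball] with x hx
          apply Set.indicator_of_notMem
          intro hmem
          apply hy
          have hxX : dist x X < 2*r := mem_ball.mp hx
          have habs := abs_le.mp (hlip x X)
          have hd8 := hdivL (dist x X) dist_nonneg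
          have hχx : χ x ≤ 4*r + (2*r)/8 := by linarith [habs.2]
          have htri := dist_triangle y x X
          exact mem_ball.mpr (by
            linarith [show dist y x < χ x from hmem])
        rw [lintegral_congr_ae hae, lintegral_zero]
      rw [hzero, mul_zero]
  refine le_trans (lintegral_mono hmain) ?_
  rw [lintegral_indicator measurableSet_ball, lintegral_const_mul _ hf]

lemma lowerM (hL : 8 ≤ L) (hpos : ∀ x, 0 < χ x)
    (hlip : ∀ x y, |χ x - χ y| ≤ dist x y / L) (hcont : Continuous χ)
    (X : EuclideanSpace ℝ (Fin d)) {r : ℝ} (hr : χ X / 4 ≤ r)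
    (f : EuclideanSpace ℝ (Fin d) → ℝ≥0∞) (hf : Measurable f) :
    ENNReal.ofReal (8/41) ^ d * (∫⁻ y in ball X r, f y)
      ≤ ∫⁻ x in ball X (2 * r), (∫⁻ y in ball x (χ x), f y) / volume (ball x (χ x)) := by
  set ω := volume (ball (0 : EuclideanSpace ℝ (Fin d)) 1) with hωdef
  have hω0 : ω ≠ 0 := (measure_ball_pos volume _ one_pos).ne'
  have hωt : ω ≠ ⊤ := measure_ball_lt_top.ne
  have hL0 : (0:ℝ) < L := by linarith
  have hdivL : ∀ a : ℝ, 0 ≤ a → a / L ≤ a / 8 := fun a ha => by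
    rw [div_le_div_iff₀ hL0 (by norm_num : (0:ℝ) < 8)]; nlinarith
  have hr0 : (0:ℝ) < r := lt_of_lt_of_le (by have := hpos X; linarith) hr
  have hχX : χ X ≤ 4 * r := by linarith
  rw [swapM χ hpos hcont f hf X (2*r)]
  have hHge : ∀ y ∈ ball X r, ENNReal.ofReal (8/41) ^ d
      ≤ ∫⁻ x in ball X (2*r), Set.indicator {x' | dist y x' < χ x'}
          (fun x' => (volume (ball x' (χ x')))⁻¹) x := by
    intro y hy
    have hyX : dist y X < r := mem_ball.mp hy
    have hyc := hpos y
    have habsy := abs_le.mp (hlip y X)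
    have hd8y := hdivL (dist y X) dist_nonneg
    have hχy : χ y ≤ 4*r + r/8 := by linarith [habsy.2]
    have hsub : ball y (χ y / 5) ⊆ ball X (2*r) := by
      intro x hx
      have h1 : dist x y < χ y / 5 := mem_ball.mp hx
      have htri := dist_triangle x y X
      exact mem_ball.mpr (by linarith)
    have hptc : ∀ᵐ x ∂(volume.restrict (ball y (χ y / 5))),
        (ENNReal.ofReal (41/40 * χ y) ^ d * ω)⁻¹
        ≤ Set.indicator {x' | dist y x' < χ x'}
            (fun x' => (volume (ball x' (χ x')))⁻¹) x := by
      filter_upwards [ae_restrict_mem measurableSet_ball] with x hx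
      have hxy : dist x y < χ y / 5 := mem_ball.mp hx
      have habs := abs_le.mp (hlip x y)
      have hd8 := hdivL (dist x y) dist_nonneg
      have hχx1 : χ x ≤ 41/40 * χ y := by linarith [habs.2]
      have hχx2 : 39/40 * χ y ≤ χ x := by linarith [habs.1]
      have hmem : dist y x < χ x := by rw [dist_comm]; linarith
      rw [Set.indicator_of_mem (show x ∈ {x' : EuclideanSpace ℝ (Fin d) |
          dist y x' < χ x'} from hmem)]
      apply ENNReal.inv_le_inv'
      rw [← vol_ball x (by linarith : (0:ℝ) < 41/40 * χ y)]
      exact measure_mono (ball_subset_ball hχx1)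
    calc ENNReal.ofReal (8/41) ^ d
        = ENNReal.ofReal (χ y / 5) ^ d * ω * (ENNReal.ofReal (41/40 * χ y) ^ d * ω)⁻¹ :=
          (ratio_cancel hω0 hωt (by linarith) (by norm_num) (by ring)).symm
      _ = (ENNReal.ofReal (41/40 * χ y) ^ d * ω)⁻¹ * volume (ball y (χ y / 5)) := by
          rw [vol_ball y (by linarith : (0:ℝ) < χ y / 5), mul_comm]
      _ = ∫⁻ _ in ball y (χ y / 5), (ENNReal.ofReal (41/40 * χ y) ^ d * ω)⁻¹ :=
          (setLIntegral_const _ _).symm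
      _ ≤ ∫⁻ x in ball y (χ y / 5), Set.indicator {x' | dist y x' < χ x'}
            (fun x' => (volume (ball x' (χ x')))⁻¹) x := lintegral_mono_ae hptc
      _ ≤ ∫⁻ x in ball X (2*r), Set.indicator {x' | dist y x' < χ x'}
            (fun x' => (volume (ball x' (χ x')))⁻¹) x := lintegral_mono_set hsub
  calc ENNReal.ofReal (8/41) ^ d * ∫⁻ y in ball X r, f y
      = ∫⁻ y in ball X r, ENNReal.ofReal (8/41) ^ d * f y :=
        (lintegral_const_mul _ hf).symm
    _ ≤ ∫⁻ y in ball X r, f y * (∫⁻ x in ball X (2*r),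
          Set.indicator {x' | dist y x' < χ x'}
            (fun x' => (volume (ball x' (χ x')))⁻¹) x) := by
        refine lintegral_mono_ae ?_
        filter_upwards [ae_restrict_mem measurableSet_ball] with y hy
        calc ENNReal.ofReal (8/41) ^ d * f y = f y * ENNReal.ofReal (8/41) ^ d :=
              mul_comm _ _
          _ ≤ f y * _ := mul_le_mul_right (hHge y hy) _
    _ ≤ ∫⁻ y, f y * (∫⁻ x in ball X (2*r),
          Set.indicator {x' | dist y x' < χ x'}
            (fun x' => (volume (ball x' (χ x')))⁻¹) x) :=
        setLIntegral_le_lintegral _ _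

end Main

end Stmt5Aux

open Stmt5Aux

theorem stmt5 {d : ℕ} (L : ℝ) (hL : 8 ≤ L)
    (χ : EuclideanSpace ℝ (Fin d) → ℝ) (hpos : ∀ x, 0 < χ x)
    (hlip : ∀ x y, |χ x - χ y| ≤ dist x y / L) :
    ∃ C : ℝ≥0∞, 1 ≤ C ∧ C < ⊤ ∧
      ∀ (X : EuclideanSpace ℝ (Fin d)) (r : ℝ), χ X / 4 ≤ r →
        ∀ f : EuclideanSpace ℝ (Fin d) → ℝ≥0∞, Measurable f →
          (∫⁻ z in ball X r, f z) / volume (ball X r) ≤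
              C * ((∫⁻ x in ball X (2 * r),
                    (∫⁻ y in ball x (χ x), f y) / volume (ball x (χ x))) /
                  volume (ball X (2 * r))) ∧
            C * ((∫⁻ x in ball X (2 * r),
                  (∫⁻ y in ball x (χ x), f y) / volume (ball x (χ x))) /
                volume (ball X (2 * r))) ≤
              C ^ 2 * ((∫⁻ z in ball X (7 * r), f z) / volume (ball X (7 * r))) := by
  have hcont : Continuous χ := by
    have hlip1 : LipschitzWith 1 χ := LipschitzWith.of_dist_le_mul fun x y => by
      rw [Real.dist_eq, NNReal.coe_one, one_mul]
      exact (hlip x y).trans (div_le_self dist_nonneg (by linarith))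
    exact hlip1.continuous
  refine ⟨(11:ℝ≥0∞) ^ d, ?_, ?_, ?_⟩
  · calc (1:ℝ≥0∞) = 1 ^ d := (one_pow d).symm
      _ ≤ 11 ^ d := pow_le_pow_left₀ zero_le (by norm_num) d
  · exact ENNReal.pow_lt_top (by simp)
  intro X r hr f hf
  have hr0 : (0:ℝ) < r := lt_of_lt_of_le (by have := hpos X; linarith) hr
  have hlow := lowerM L χ hL hpos hlip hcont X hr f hf
  have hup := upperM L χ hL hpos hlip hcont X hr f hf
  set ω := volume (ball (0 : EuclideanSpace ℝ (Fin d)) 1) with hωdef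
  have hs10 : (ENNReal.ofReal 2) ^ d ≠ 0 :=
    pow_ne_zero _ (ENNReal.ofReal_pos.mpr (by norm_num)).ne'
  have hs1t : (ENNReal.ofReal 2) ^ d ≠ ⊤ := ENNReal.pow_ne_top ENNReal.ofReal_ne_top
  have hs20 : (ENNReal.ofReal (7/2)) ^ d ≠ 0 :=
    pow_ne_zero _ (ENNReal.ofReal_pos.mpr (by norm_num)).ne'
  have hs2t : (ENNReal.ofReal (7/2)) ^ d ≠ ⊤ := ENNReal.pow_ne_top ENNReal.ofReal_ne_top
  have hV2 : volume (ball X (2*r)) = (ENNReal.ofReal 2) ^ d * volume (ball X r) := by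
    rw [vol_ball X (by linarith : (0:ℝ) < 2*r), vol_ball X hr0,
      ENNReal.ofReal_mul (by norm_num : (0:ℝ) ≤ 2), mul_pow, mul_assoc]
  have hV7 : volume (ball X (7*r)) = (ENNReal.ofReal (7/2)) ^ d * volume (ball X (2*r)) := by
    rw [show (7:ℝ)*r = (7/2)*(2*r) by ring, vol_ball X (by linarith : (0:ℝ) < (7/2)*(2*r)),
      vol_ball X (by linarith : (0:ℝ) < 2*r),
      ENNReal.ofReal_mul (by norm_num : (0:ℝ) ≤ 7/2), mul_pow, mul_assoc]
  constructor
  · rw [hV2]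
    refine divA hlow hs10 hs1t ?_
    calc (ENNReal.ofReal 2) ^ d ≤ (ENNReal.ofReal (88/41)) ^ d :=
          pow_le_pow_left₀ zero_le (ENNReal.ofReal_le_ofReal (by norm_num)) d
      _ = (ENNReal.ofReal 11 * ENNReal.ofReal (8/41)) ^ d := by
          rw [← ENNReal.ofReal_mul (by norm_num : (0:ℝ) ≤ 11)]
          norm_num
      _ = (11:ℝ≥0∞) ^ d * (ENNReal.ofReal (8/41)) ^ d := by
          rw [mul_pow, ENNReal.ofReal_ofNat]
  · rw [hV7, pow_two, mul_assoc]
    refine mul_le_mul_right ?_ _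
    refine divB hup hs20 hs2t ?_
    calc (ENNReal.ofReal (9/7)) ^ d * (ENNReal.ofReal (7/2)) ^ d
        = (ENNReal.ofReal (9/2)) ^ d := by
          rw [← mul_pow, ← ENNReal.ofReal_mul (by norm_num : (0:ℝ) ≤ 9/7)]
          norm_num
      _ ≤ (ENNReal.ofReal 11) ^ d :=
          pow_le_pow_left₀ zero_le (ENNReal.ofReal_le_ofReal (by norm_num)) d
      _ = (11:ℝ≥0∞) ^ d := by rw [ENNReal.ofReal_ofNat]
end
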